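/- Let n, m ∈ ℕ and λ > 0. Let f : ℝⁿ → ℝⁿ be Lipschitz with constant ℓ_f and, for j = 1, …, m, let g_j : ℝⁿ → ℝⁿ be Lipschitz with constant ℓ_j and let u_j : ℝⁿ → ℝ be Lipschitz with constant L_j and satisfy |u_j(y)| ≤ M_j for all y; set ℓ_sys = ℓ_f + Σ_j ℓ_j·M_j and assume ℓ_sys > 0. Let Ψ : ℝⁿ → ℝ be continuously differentiable with |∇Ψ(y)·g_j(y)| ≤ M_{g_j} for all y and each j, and suppose Ψ(y) ≤ M_Ψ for all y ∈ ℝⁿ. Suppose there is D > 0 with ‖f(y) + Σ_j g_j(y)·u_j(z)‖ ≤ D for all y, z ∈ ℝⁿ. Let φ : ℝⁿ → ℝ be continuous, and assume ∇Ψ(y)·( f(y) + Σ_j g_j(y)·u_j(y) ) ≥ λ·Ψ(y) for every y with Ψ(y) ≥ 0 and φ(y) ≥ 0. Then for every x₀ ∈ ℝⁿ with Ψ(x₀) > 0 there exists T* > 0 such that for every T ∈ (0, T*) the following holds: if x : [0, ∞) → ℝⁿ is continuous with x(0) = x₀ and, for every k ∈ ℕ, x is differentiable on [kT, (k+1)T]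 with ẋ(t) = f(x(t)) + Σ_j g_j(x(t))·u_j(x(kT)) for all t in that interval, then there exists τ ≥ 0 with φ(x(τ)) ≤ 0 and Ψ(x(t)) > 0 for all t ∈ [0, τ]. -/

import Mathlib

open Set Topology Filter

/-- If `ψ` has derivative `d t ≥ δ` within `[a,b]`, then `ψ b - ψ a ≥ δ (b-a)`. -/
lemma incr_aux {ψ d : ℝ → ℝ} {a b δ : ℝ} (hab : a ≤ b)
    (hψ : ∀ t ∈ Set.Icc a b, HasDerivWithinAt ψ (d t) (Set.Icc a b) t)
    (hd : ∀ t ∈ Set.Ioo a b, δ ≤ d t) :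
    δ * (b - a) ≤ ψ b - ψ a := by
  set h : ℝ → ℝ := fun t => ψ t - δ * t with hh
  have hderiv : ∀ t ∈ Set.Ioo a b, HasDerivAt h (d t - δ) t := by
    intro t ht
    have h1 : HasDerivAt ψ (d t) t :=
      (hψ t (Ioo_subset_Icc_self ht)).hasDerivAt (Icc_mem_nhds ht.1 ht.2)
    have h2 := h1.sub ((hasDerivAt_id t).const_mul δ)
    rw [mul_one] at h2
    exact h2
  have hmono : MonotoneOn h (Set.Icc a b) := by
    apply monotoneOn_of_deriv_nonneg (convex_Icc a b)
    · exact ContinuousOn.sub (fun t ht => (hψ t ht).continuousWithinAt)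
        (continuous_const.mul continuous_id).continuousOn
    · intro t ht
      rw [interior_Icc] at ht
      exact (hderiv t ht).differentiableAt.differentiableWithinAt
    · intro t ht
      rw [interior_Icc] at ht
      rw [(hderiv t ht).deriv]
      linarith [hd t ht]
  have := hmono (left_mem_Icc.2 hab) (right_mem_Icc.2 hab) hab
  simp only [hh] at this
  nlinarith


/-- Sampled-data preservation of the reach-avoid guarantee under fast sampling
(quantitative form of the paper's Lemma 2): under Lipschitz and boundedness hypotheses
on the dynamics and the controller, and the guidance-barrier condition
`∇Ψ(y)·(f(y) + Σ_j g_j(y)·u_j(y)) ≥ λ·Ψ(y)` whenever `Ψ(y) ≥ 0` and `φ(y) ≥ 0`,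
every point `x₀` with `Ψ(x₀) > 0` admits `T* > 0` such that for every sampling period
`T ∈ (0, T*)`, any zero-order-hold closed-loop trajectory starting at `x₀` reaches a
time `τ ≥ 0` with `φ(x τ) ≤ 0` while keeping `Ψ(x t) > 0` on `[0, τ]`. -/
theorem stmt_13 (n m : ℕ) (lam : ℝ) (hlam : 0 < lam)
    (f : EuclideanSpace ℝ (Fin n) → EuclideanSpace ℝ (Fin n)) (ℓf : ℝ)
    (hf : ∀ y z, ‖f y - f z‖ ≤ ℓf * ‖y - z‖)
    (g : Fin m → EuclideanSpace ℝ (Fin n) → EuclideanSpace ℝ (Fin n)) (ℓg : Fin m → ℝ)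
    (hg : ∀ j y z, ‖g j y - g j z‖ ≤ ℓg j * ‖y - z‖)
    (u : Fin m → EuclideanSpace ℝ (Fin n) → ℝ) (L : Fin m → ℝ)
    (hu : ∀ j y z, |u j y - u j z| ≤ L j * ‖y - z‖)
    (M : Fin m → ℝ) (hM : ∀ j y, |u j y| ≤ M j)
    (hsys : 0 < ℓf + ∑ j, ℓg j * M j)
    (Ψ : EuclideanSpace ℝ (Fin n) → ℝ) (hΨ : ContDiff ℝ 1 Ψ)
    (Mg : Fin m → ℝ) (hMg : ∀ j y, |fderiv ℝ Ψ y (g j y)| ≤ Mg j)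
    (MΨ : ℝ) (hMΨ : ∀ y, Ψ y ≤ MΨ)
    (D : ℝ) (hD : 0 < D)
    (hDbound : ∀ y z, ‖f y + ∑ j, u j z • g j y‖ ≤ D)
    (φ : EuclideanSpace ℝ (Fin n) → ℝ) (hφ : Continuous φ)
    (hguide : ∀ y, 0 ≤ Ψ y → 0 ≤ φ y →
      fderiv ℝ Ψ y (f y + ∑ j, u j y • g j y) ≥ lam * Ψ y) :
    ∀ x₀ : EuclideanSpace ℝ (Fin n), 0 < Ψ x₀ →
      ∃ Tstar > (0 : ℝ), ∀ T : ℝ, 0 < T → T < Tstar →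
        ∀ x : ℝ → EuclideanSpace ℝ (Fin n),
          ContinuousOn x (Set.Ici 0) → x 0 = x₀ →
          (∀ k : ℕ, ∀ t ∈ Set.Icc ((k : ℝ) * T) (((k : ℝ) + 1) * T),
            HasDerivWithinAt x (f (x t) + ∑ j, u j (x ((k : ℝ) * T)) • g j (x t))
              (Set.Icc ((k : ℝ) * T) (((k : ℝ) + 1) * T)) t) →
          ∃ τ ≥ (0 : ℝ), φ (x τ) ≤ 0 ∧ ∀ t ∈ Set.Icc (0 : ℝ) τ, 0 < Ψ (x t) := by
  intro x₀ hx₀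
  have hΨdiff : Differentiable ℝ Ψ := hΨ.differentiable one_ne_zero
  set ε : ℝ := Ψ x₀ / 2 with hεdef
  have hε0 : 0 < ε := by positivity
  have hMg0 : ∀ j, 0 ≤ Mg j := fun j => le_trans (abs_nonneg _) (hMg j 0)
  set C : ℝ := ∑ j, max (L j) 0 * Mg j with hCdef
  have hC0 : 0 ≤ C :=
    Finset.sum_nonneg fun j _ => mul_nonneg (le_max_right _ _) (hMg0 j)
  set δ : ℝ := lam * ε / 2 with hδdef
  have hδ0 : 0 < δ := by positivity
  refine ⟨lam * ε / (2 * (C * D + 1)), by positivity, ?_⟩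
  intro T hT0 hTs x hxc hx0 hode
  have hψcont : ContinuousOn (fun t => Ψ (x t)) (Set.Ici 0) :=
    hΨ.continuous.comp_continuousOn hxc
  have hφcont : ContinuousOn (fun t => φ (x t)) (Set.Ici 0) := hφ.comp_continuousOn hxc
  -- displacement bound within a sampling interval
  have hdisp : ∀ k : ℕ, ∀ t ∈ Set.Icc ((k : ℝ) * T) (((k : ℝ) + 1) * T),
      ‖x t - x ((k : ℝ) * T)‖ ≤ D * T := by
    intro k t ht
    have h1 := norm_image_sub_le_of_norm_deriv_le_segment' (hode k)
      (fun s _ => hDbound (x s) (x ((k : ℝ) * T))) t ht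
    have h2 : t - (k : ℝ) * T ≤ T := by
      have := ht.2
      nlinarith
    calc ‖x t - x ((k : ℝ) * T)‖ ≤ D * (t - (k : ℝ) * T) := h1
      _ ≤ D * T := mul_le_mul_of_nonneg_left h2 hD.le
  -- chain rule
  have hchain : ∀ k : ℕ, ∀ t ∈ Set.Icc ((k : ℝ) * T) (((k : ℝ) + 1) * T),
      HasDerivWithinAt (fun s => Ψ (x s))
        (fderiv ℝ Ψ (x t) (f (x t) + ∑ j, u j (x ((k : ℝ) * T)) • g j (x t)))
        (Set.Icc ((k : ℝ) * T) (((k : ℝ) + 1) * T)) t := by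
    intro k t ht
    exact (hΨdiff (x t)).hasFDerivAt.comp_hasDerivWithinAt t (hode k t ht)
  -- derivative lower bound
  have hCDT : C * (D * T) ≤ lam * ε / 2 := by
    have h2 : T * (2 * (C * D + 1)) < lam * ε := (lt_div_iff₀ (by positivity)).1 hTs
    nlinarith [mul_nonneg hC0 hD.le]
  have hdlow : ∀ k : ℕ, ∀ t ∈ Set.Icc ((k : ℝ) * T) (((k : ℝ) + 1) * T),
      ε ≤ Ψ (x t) → 0 ≤ φ (x t) →
      δ ≤ fderiv ℝ Ψ (x t) (f (x t) + ∑ j, u j (x ((k : ℝ) * T)) • g j (x t)) := by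
    intro k t ht hψt hφt
    have hsplit : fderiv ℝ Ψ (x t) (f (x t) + ∑ j, u j (x ((k : ℝ) * T)) • g j (x t))
        = fderiv ℝ Ψ (x t) (f (x t) + ∑ j, u j (x t) • g j (x t))
          + ∑ j, (u j (x ((k : ℝ) * T)) - u j (x t)) * fderiv ℝ Ψ (x t) (g j (x t)) := by
      simp only [map_add, map_sum, map_smul, smul_eq_mul]
      rw [add_assoc, ← Finset.sum_add_distrib]
      congr 1
      apply Finset.sum_congr rfl
      intro j _
      ring
    have herr : |∑ j, (u j (x ((k : ℝ) * T)) - u j (x t)) * fderiv ℝ Ψ (x t) (g j (x t))|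
        ≤ C * (D * T) := by
      calc |∑ j, (u j (x ((k : ℝ) * T)) - u j (x t)) * fderiv ℝ Ψ (x t) (g j (x t))|
          ≤ ∑ j, |(u j (x ((k : ℝ) * T)) - u j (x t)) * fderiv ℝ Ψ (x t) (g j (x t))| :=
            Finset.abs_sum_le_sum_abs _ _
        _ ≤ ∑ j, (max (L j) 0 * Mg j) * (D * T) := by
            apply Finset.sum_le_sum
            intro j _
            rw [abs_mul]
            have hn : ‖x ((k : ℝ) * T) - x t‖ ≤ D * T := by
              rw [norm_sub_rev]; exact hdisp k t ht
            have h1 : |u j (x ((k : ℝ) * T)) - u j (x t)| ≤ max (L j) 0 * (D * T) := by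
              calc |u j (x ((k : ℝ) * T)) - u j (x t)|
                  ≤ L j * ‖x ((k : ℝ) * T) - x t‖ := hu j _ _
                _ ≤ max (L j) 0 * ‖x ((k : ℝ) * T) - x t‖ :=
                    mul_le_mul_of_nonneg_right (le_max_left _ _) (norm_nonneg _)
                _ ≤ max (L j) 0 * (D * T) :=
                    mul_le_mul_of_nonneg_left hn (le_max_right _ _)
            have h2 : |fderiv ℝ Ψ (x t) (g j (x t))| ≤ Mg j := hMg j (x t)
            have h3 : (0:ℝ) ≤ max (L j) 0 * (D * T) :=
              mul_nonneg (le_max_right _ _) (by positivity)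
            nlinarith [abs_nonneg (u j (x ((k : ℝ) * T)) - u j (x t)),
              abs_nonneg (fderiv ℝ Ψ (x t) (g j (x t))), hMg0 j]
        _ = C * (D * T) := by rw [hCdef, Finset.sum_mul]
    have hΨ0' : (0:ℝ) ≤ Ψ (x t) := le_trans hε0.le hψt
    have hguide' := hguide (x t) hΨ0' hφt
    have hΨy : lam * ε ≤ lam * Ψ (x t) := mul_le_mul_of_nonneg_left hψt hlam.le
    rw [hsplit]
    have habs := abs_le.1 herr
    rw [hδdef]
    linarith [habs.1]
  -- single-interval increment
  have step : ∀ (k : ℕ) (a b : ℝ), (k : ℝ) * T ≤ a → a ≤ b → b ≤ ((k : ℝ) + 1) * T →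
      (∀ t ∈ Set.Icc a b, ε ≤ Ψ (x t) ∧ 0 ≤ φ (x t)) →
      δ * (b - a) ≤ Ψ (x b) - Ψ (x a) := by
    intro k a b hka hab hbk hcond
    apply incr_aux (d := fun t =>
      fderiv ℝ Ψ (x t) (f (x t) + ∑ j, u j (x ((k : ℝ) * T)) • g j (x t))) hab
    · intro t ht
      exact (hchain k t (Icc_subset_Icc hka hbk ht)).mono (Icc_subset_Icc hka hbk)
    · intro t ht
      have ht' : t ∈ Set.Icc a b := Ioo_subset_Icc_self ht
      exact hdlow k t (Icc_subset_Icc hka hbk ht') (hcond t ht').1 (hcond t ht').2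
  -- chained growth
  have growk : ∀ k : ℕ, ∀ b ∈ Set.Icc (0:ℝ) (((k : ℝ) + 1) * T),
      (∀ t ∈ Set.Icc (0:ℝ) b, ε ≤ Ψ (x t) ∧ 0 ≤ φ (x t)) →
      Ψ (x 0) + δ * b ≤ Ψ (x b) := by
    intro k
    induction k with
    | zero =>
      intro b hb hcond
      have h := step 0 0 b (by norm_num) hb.1 (by push_cast; simpa using hb.2) hcond
      linarith
    | succ k ih =>
      intro b hb hcond
      by_cases hble : b ≤ ((k : ℝ) + 1) * T
      · exact ih b ⟨hb.1, hble⟩ hcond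
      · push_neg at hble
        have ha0 : (0:ℝ) ≤ ((k : ℝ) + 1) * T := by positivity
        have h1 := ih (((k : ℝ) + 1) * T) ⟨ha0, le_refl _⟩
          (fun t ht => hcond t ⟨ht.1, le_trans ht.2 hble.le⟩)
        have hkk : ((k + 1 : ℕ) : ℝ) * T ≤ ((k : ℝ) + 1) * T := by push_cast; exact le_rfl
        have hbk : b ≤ (((k + 1 : ℕ) : ℝ) + 1) * T := by
          have := hb.2; push_cast at this ⊢; linarith
        have h2 := step (k + 1) (((k : ℝ) + 1) * T) b hkk hble.le hbk
          (fun t ht => hcond t ⟨le_trans ha0 ht.1, ht.2⟩)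
        nlinarith
  have grow : ∀ b : ℝ, 0 ≤ b →
      (∀ t ∈ Set.Icc (0:ℝ) b, ε ≤ Ψ (x t) ∧ 0 ≤ φ (x t)) →
      Ψ (x 0) + δ * b ≤ Ψ (x b) := by
    intro b hb hcond
    obtain ⟨k, hk⟩ := exists_nat_ge (b / T)
    have hbk : b ≤ ((k : ℝ) + 1) * T := by
      have := (div_le_iff₀ hT0).1 hk
      nlinarith
    exact growk k b ⟨hb, hbk⟩ hcond
  have hψ0 : Ψ (x 0) = Ψ x₀ := by rw [hx0]
  -- barrier stays above ε while φ ≥ 0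
  have pos : ∀ b : ℝ, 0 ≤ b → (∀ t ∈ Set.Icc (0:ℝ) b, 0 ≤ φ (x t)) →
      ∀ t ∈ Set.Icc (0:ℝ) b, ε < Ψ (x t) := by
    intro b hb hφpos
    by_contra hcon
    push_neg at hcon
    obtain ⟨t₀, ht₀, ht₀ψ⟩ := hcon
    set S : Set ℝ := {t | t ∈ Set.Icc (0:ℝ) b ∧ Ψ (x t) ≤ ε} with hSdef
    have hSne : S.Nonempty := ⟨t₀, ht₀, ht₀ψ⟩
    have hScl : IsClosed S := by
      have heq : S = Set.Icc (0:ℝ) b ∩ (fun t => Ψ (x t)) ⁻¹' Set.Iic ε := rfl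
      rw [heq]
      exact ContinuousOn.preimage_isClosed_of_isClosed
        (hψcont.mono (fun t ht => ht.1)) isClosed_Icc isClosed_Iic
    have hSbdd : BddBelow S := ⟨0, fun t ht => ht.1.1⟩
    set t₁ := sInf S with ht₁def
    have ht₁S : t₁ ∈ S := hScl.csInf_mem hSne hSbdd
    have ht₁0 : 0 < t₁ := by
      rcases (ht₁S.1.1).lt_or_eq with h | h
      · exact h
      · exfalso
        have : Ψ (x t₁) ≤ ε := ht₁S.2
        rw [← h, hψ0] at this
        rw [hεdef] at this
        linarith
    have hlt : ∀ t : ℝ, 0 ≤ t → t < t₁ → ε < Ψ (x t) := by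
      intro t h0 hlt
      by_contra h; push_neg at h
      have hmem : t ∈ S := ⟨⟨h0, le_trans hlt.le ht₁S.1.2⟩, h⟩
      exact absurd (csInf_le hSbdd hmem) (not_le.2 hlt)
    have hεt₁ : ε ≤ Ψ (x t₁) := by
      have hcw : ContinuousWithinAt (fun t => Ψ (x t)) (Set.Ici 0) t₁ :=
        hψcont t₁ ht₁0.le
      have hne : (𝓝[Set.Ioo (0:ℝ) t₁] t₁).NeBot := right_nhdsWithin_Ioo_neBot ht₁0
      have htend : Filter.Tendsto (fun t => Ψ (x t)) (𝓝[Set.Ioo (0:ℝ) t₁] t₁)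
          (𝓝 (Ψ (x t₁))) := hcw.mono (fun t ht => ht.1.le)
      exact ge_of_tendsto htend (Filter.eventually_of_mem self_mem_nhdsWithin
        (fun t ht => (hlt t ht.1.le ht.2).le))
    have hcond : ∀ t ∈ Set.Icc (0:ℝ) t₁, ε ≤ Ψ (x t) ∧ 0 ≤ φ (x t) := by
      intro t ht
      refine ⟨?_, hφpos t ⟨ht.1, le_trans ht.2 ht₁S.1.2⟩⟩
      rcases eq_or_lt_of_le ht.2 with he | hl
      · rw [he]; exact hεt₁
      · exact (hlt t ht.1 hl).le
    have hgrow := grow t₁ ht₁0.le hcond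
    have h2ε : Ψ (x 0) = 2 * ε := by rw [hψ0, hεdef]; ring
    nlinarith [ht₁S.2]
  -- main case split
  by_cases hφ0 : φ (x 0) ≤ 0
  · refine ⟨0, le_refl 0, hφ0, ?_⟩
    intro t ht
    have : t = 0 := le_antisymm ht.2 ht.1
    rw [this, hψ0]
    exact hx₀
  · push_neg at hφ0
    set B : ℝ := (MΨ - Ψ (x 0)) / δ + 1 with hBdef
    have hψMΨ : Ψ (x 0) ≤ MΨ := hMΨ _
    have hB0 : 0 < B := by
      rw [hBdef]
      have : 0 ≤ (MΨ - Ψ (x 0)) / δ := div_nonneg (by linarith) hδ0.le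
      linarith
    have hhit : ∃ t ∈ Set.Icc (0:ℝ) B, φ (x t) ≤ 0 := by
      by_contra hcon
      push_neg at hcon
      have hφpos : ∀ t ∈ Set.Icc (0:ℝ) B, 0 ≤ φ (x t) := fun t ht => (hcon t ht).le
      have hεb := pos B hB0.le hφpos
      have hgrow := grow B hB0.le (fun t ht => ⟨(hεb t ht).le, hφpos t ht⟩)
      have hbM : Ψ (x B) ≤ MΨ := hMΨ _
      have hδB : δ * B = (MΨ - Ψ (x 0)) + δ := by
        rw [hBdef]; field_simp
      linarith
    obtain ⟨t₂, ht₂, ht₂φ⟩ := hhit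
    set A : Set ℝ := {t | t ∈ Set.Icc (0:ℝ) B ∧ φ (x t) ≤ 0} with hAdef
    have hAne : A.Nonempty := ⟨t₂, ht₂, ht₂φ⟩
    have hAcl : IsClosed A := by
      have heq : A = Set.Icc (0:ℝ) B ∩ (fun t => φ (x t)) ⁻¹' Set.Iic 0 := rfl
      rw [heq]
      exact ContinuousOn.preimage_isClosed_of_isClosed
        (hφcont.mono (fun t ht => ht.1)) isClosed_Icc isClosed_Iic
    have hAbdd : BddBelow A := ⟨0, fun t ht => ht.1.1⟩
    set τ := sInf A with hτdef
    have hτA : τ ∈ A := hAcl.csInf_mem hAne hAbdd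
    have hτ0 : 0 ≤ τ := hτA.1.1
    have hτpos : 0 < τ := by
      rcases hτ0.lt_or_eq with h | h
      · exact h
      · exfalso; have h2 := hτA.2; rw [← h] at h2; exact absurd h2 (not_le.2 hφ0)
    have hφlt : ∀ t : ℝ, 0 ≤ t → t < τ → 0 < φ (x t) := by
      intro t h0 hlt
      by_contra h; push_neg at h
      have hmem : t ∈ A := ⟨⟨h0, le_trans hlt.le hτA.1.2⟩, h⟩
      exact absurd (csInf_le hAbdd hmem) (not_le.2 hlt)
    have hφτ : 0 ≤ φ (x τ) ∨ True := Or.inr trivial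
    have hφτge : 0 ≤ φ (x τ) := by
      have hcw : ContinuousWithinAt (fun t => φ (x t)) (Set.Ici 0) τ := hφcont τ hτ0
      have hne : (𝓝[Set.Ioo (0:ℝ) τ] τ).NeBot := right_nhdsWithin_Ioo_neBot hτpos
      have htend : Filter.Tendsto (fun t => φ (x t)) (𝓝[Set.Ioo (0:ℝ) τ] τ)
          (𝓝 (φ (x τ))) := hcw.mono (fun t ht => ht.1.le)
      exact ge_of_tendsto htend (Filter.eventually_of_mem self_mem_nhdsWithin
        (fun t ht => (hφlt t ht.1.le ht.2).le))
    have hφge : ∀ t ∈ Set.Icc (0:ℝ) τ, 0 ≤ φ (x t) := by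
      intro t ht
      rcases eq_or_lt_of_le ht.2 with he | hl
      · rw [he]; exact hφτge
      · exact (hφlt t ht.1 hl).le
    refine ⟨τ, hτ0, hτA.2, ?_⟩
    intro t ht
    exact lt_trans hε0 (pos τ hτ0 hφge t ht)
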